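/- Let H be a subgroup of G̃. Suppose there exist f, g ∈ H and real numbers a < b < b' such that f(a) = a, g(a) = a, f(b) = b, g(b') = b', (a, b) ⊆ supp(f) and (a, b') ⊆ supp(g). Then there exist f₁, g₁ ∈ H and real numbers b₁ < c₁ such that g₁(b₁) = b₁, f₁(c₁) = c₁, (b₁, c₁] ⊆ supp(g₁) and [b₁, c₁) ⊆ supp(f₁). -/

import Mathlib

noncomputable section

abbrev SL2Z := Matrix.SpecialLinearGroup (Fin 2) ℤ

/-- The Möbius action of `A ∈ SL(2, ℤ)` on `x ∈ ℝ`. -/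
def mobius (A : SL2Z) (x : ℝ) : ℝ :=
  ((A 0 0 : ℤ) * x + (A 0 1 : ℤ)) / ((A 1 0 : ℤ) * x + (A 1 1 : ℤ))

/-- The Möbius action of `A = !![a, b; c, d]` is defined at `x` if `c·x + d ≠ 0`. -/
def mobiusDefinedAt (A : SL2Z) (x : ℝ) : Prop :=
  ((A 1 0 : ℤ) : ℝ) * x + ((A 1 1 : ℤ) : ℝ) ≠ 0

/-- `x` is a fixed point of `A = !![a, b; c, d]` if `a·x + b = x·(c·x + d)`. -/
def IsFixedPt (A : SL2Z) (x : ℝ) : Prop :=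
  (A 0 0 : ℤ) * x + (A 0 1 : ℤ) = x * ((A 1 0 : ℤ) * x + (A 1 1 : ℤ))

/-- `A` is hyperbolic if `|a + d| > 2`. -/
def IsHyperbolic (A : SL2Z) : Prop := 2 < |A 0 0 + A 1 1|

/-- `P_ℤ` is the set of real fixed points of hyperbolic elements of SL(2, ℤ). -/
def PZ : Set ℝ := {x | ∃ A : SL2Z, IsHyperbolic A ∧ IsFixedPt A x}

/-- A real number is a quadratic irrational if it is irrational and of the form
`u + v·√k` with `u, v ∈ ℚ` and `k` a positive nonsquare integer. -/
def IsQuadIrr (s : ℝ) : Prop :=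
  Irrational s ∧
    ∃ (u v : ℚ) (k : ℕ), 0 < k ∧ ¬ IsSquare k ∧ s = (u : ℝ) + (v : ℝ) * Real.sqrt k

/-- `f` coincides on `S` with the (everywhere-defined) Möbius action of a single
element of SL(2, ℤ). -/
def MobiusLikeOn (f : ℝ → ℝ) (S : Set ℝ) : Prop :=
  ∃ A : SL2Z, ∀ y ∈ S, mobiusDefinedAt A y ∧ f y = mobius A y

/-- Membership in the group `G̃` of piecewise-`PSL₂(ℤ)` homeomorphisms of the line:
a strictly increasing bijection of `ℝ` which, off a finite set `B`, coincides on each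
connected component of `ℝ ∖ B` with the Möbius action of an element of SL(2, ℤ),
and which equals an integer translation near infinity. -/
def InGTilde (f : Equiv.Perm ℝ) : Prop :=
  StrictMono f ∧
  (∃ B : Finset ℝ, ∀ x : ℝ, x ∉ B →
    MobiusLikeOn f (connectedComponentIn ((↑B : Set ℝ)ᶜ) x)) ∧
  ∃ (n : ℤ) (M : ℝ), ∀ x : ℝ, M ≤ |x| → f x = x + (n : ℝ)

/-- `x` is a break point of `f` if `f` does not coincide with the Möbius action of a
single element of SL(2, ℤ) on any neighbourhood of `x`. -/
def IsBreakPt (f : ℝ → ℝ) (x : ℝ) : Prop :=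
  ¬ ∃ U ∈ nhds x, MobiusLikeOn f U

/-- Membership in Monod's group `H(ℤ)`: an element of `G̃` all of whose break points
lie in `P_ℤ`. -/
def InHZ (f : Equiv.Perm ℝ) : Prop :=
  InGTilde f ∧ ∀ x : ℝ, IsBreakPt f x → x ∈ PZ

/-- The orbit of `s` under the Möbius action of SL(2, ℤ) (where defined). -/
def orbitOf (s : ℝ) : Set ℝ :=
  {x | ∃ A : SL2Z, mobiusDefinedAt A s ∧ x = mobius A s}

namespace MyAux

/-- numerator of the Möbius map -/
def NNm (A : SL2Z) (x : ℝ) : ℝ := ((A 0 0 : ℤ) : ℝ) * x + ((A 0 1 : ℤ) : ℝ)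
/-- denominator of the Möbius map -/
def DDm (A : SL2Z) (x : ℝ) : ℝ := ((A 1 0 : ℤ) : ℝ) * x + ((A 1 1 : ℤ) : ℝ)

lemma mobius_eq (A : SL2Z) (x : ℝ) : mobius A x = NNm A x / DDm A x := rfl

lemma definedAt_iff (A : SL2Z) (x : ℝ) : mobiusDefinedAt A x ↔ DDm A x ≠ 0 := Iff.rfl

lemma det2 (A : SL2Z) : A 0 0 * A 1 1 - A 0 1 * A 1 0 = 1 := by
  have := A.prop
  rw [Matrix.det_fin_two] at this
  exact this

lemma mul_entry (A B : SL2Z) (i j : Fin 2) :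
    (A * B) i j = A i 0 * B 0 j + A i 1 * B 1 j := by
  show ((A * B : SL2Z) : Matrix (Fin 2) (Fin 2) ℤ) i j = _
  rw [Matrix.SpecialLinearGroup.coe_mul, Matrix.mul_apply, Fin.sum_univ_two]

/-- Extract a single Möbius piece on a right-neighbourhood of a point. -/
lemma germ_right {h : Equiv.Perm ℝ} (hg : InGTilde h) (p : ℝ) :
    ∃ ε > 0, ∃ A : SL2Z, ∀ x ∈ Set.Ioo p (p + ε),
      mobiusDefinedAt A x ∧ h x = mobius A x := by
  classical
  obtain ⟨-, ⟨B, hB⟩, -⟩ := hg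
  set T := B.filter (fun y => p < y) with hT
  have key : ∃ ε > 0, Set.Ioo p (p + ε) ∩ (B : Set ℝ) = ∅ := by
    by_cases hTe : T.Nonempty
    · refine ⟨T.min' hTe - p, ?_, ?_⟩
      · have : p < T.min' hTe := (Finset.mem_filter.mp (T.min'_mem hTe)).2
        linarith
      · ext y
        simp only [Set.mem_inter_iff, Set.mem_Ioo, Finset.coe_sort_coe, Set.mem_empty_iff_false,
          iff_false, not_and, Finset.mem_coe, and_imp]
        intro h1 h2 hyB
        have : y ∈ T := Finset.mem_filter.mpr ⟨hyB, h1⟩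
        have := T.min'_le y this
        linarith
    · refine ⟨1, one_pos, ?_⟩
      ext y
      simp only [Set.mem_inter_iff, Set.mem_Ioo, Set.mem_empty_iff_false, iff_false, not_and,
        Finset.mem_coe, and_imp]
      intro h1 _ hyB
      exact hTe ⟨y, Finset.mem_filter.mpr ⟨hyB, h1⟩⟩
  obtain ⟨ε, hε, hdisj⟩ := key
  have hxb : p + ε / 2 ∈ Set.Ioo p (p + ε) := ⟨by linarith, by linarith⟩
  have hxbB : p + ε / 2 ∉ B := by
    intro hmem
    have : (p + ε / 2) ∈ Set.Ioo p (p + ε) ∩ (B : Set ℝ) := ⟨hxb, hmem⟩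
    rw [hdisj] at this
    exact this
  obtain ⟨A, hA⟩ := hB (p + ε / 2) hxbB
  refine ⟨ε, hε, A, fun x hx => ?_⟩
  have hsub : Set.Ioo p (p + ε) ⊆ connectedComponentIn ((↑B : Set ℝ)ᶜ) (p + ε / 2) := by
    apply IsPreconnected.subset_connectedComponentIn isPreconnected_Ioo hxb
    intro y hy hyB
    have : y ∈ Set.Ioo p (p + ε) ∩ (B : Set ℝ) := ⟨hy, hyB⟩
    rw [hdisj] at this
    exact this
  exact hA x (hsub hx)

end MyAux

section Part2
open MyAux

namespace MyAux

/-- If `h` is continuous, fixes `p`, and agrees with a Möbius map on a right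
neighbourhood of `p`, then the Möbius map fixes `p` and is defined there. -/
lemma germ_fix {h : Equiv.Perm ℝ} (hc : Continuous ⇑h) {p ε : ℝ} (hε : 0 < ε)
    (hfix : h p = p) {A : SL2Z}
    (hA : ∀ x ∈ Set.Ioo p (p + ε), mobiusDefinedAt A x ∧ h x = mobius A x) :
    NNm A p = p * DDm A p ∧ DDm A p ≠ 0 := by
  have hmem : Set.Ioo p (p + ε) ∈ nhdsWithin p (Set.Ioi p) :=
    Ioo_mem_nhdsGT_of_mem ⟨le_refl p, by linarith⟩
  have hDcont : Filter.Tendsto (fun x => DDm A x) (nhdsWithin p (Set.Ioi p)) (nhds (DDm A p)) := by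
    apply Filter.Tendsto.mono_left _ nhdsWithin_le_nhds
    exact ((continuous_const.mul continuous_id).add continuous_const).tendsto p
  have hhcont : Filter.Tendsto (fun x => h x) (nhdsWithin p (Set.Ioi p)) (nhds p) := by
    have := hc.tendsto p
    rw [hfix] at this
    exact this.mono_left nhdsWithin_le_nhds
  have h1 : Filter.Tendsto (fun x => h x * DDm A x) (nhdsWithin p (Set.Ioi p))
      (nhds (p * DDm A p)) := hhcont.mul hDcont
  have hev : (fun x => h x * DDm A x) =ᶠ[nhdsWithin p (Set.Ioi p)] (fun x => NNm A x) := by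
    filter_upwards [hmem] with x hx
    obtain ⟨hd, he⟩ := hA x hx
    rw [he, mobius_eq, div_mul_cancel₀]
    exact hd
  have h2 : Filter.Tendsto (fun x => NNm A x) (nhdsWithin p (Set.Ioi p)) (nhds (NNm A p)) := by
    apply Filter.Tendsto.mono_left _ nhdsWithin_le_nhds
    exact ((continuous_const.mul continuous_id).add continuous_const).tendsto p
  have heq : NNm A p = p * DDm A p :=
    (tendsto_nhds_unique (Filter.Tendsto.congr' hev h1) h2).symm
  refine ⟨heq, ?_⟩
  intro hD0
  -- then also NNm A p = 0, contradicting det = 1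
  have hN0 : NNm A p = 0 := by rw [heq, hD0, mul_zero]
  have hdet := det2 A
  have hdetR : ((A 0 0 : ℤ) : ℝ) * ((A 1 1 : ℤ) : ℝ) - ((A 0 1 : ℤ) : ℝ) * ((A 1 0 : ℤ) : ℝ) = 1 := by
    exact_mod_cast congrArg (fun z : ℤ => (z : ℝ)) hdet
  unfold NNm at hN0
  unfold DDm at hD0
  have : (0:ℝ) = 1 := by
    linear_combination hdetR - ((A 0 0 : ℤ) : ℝ) * hD0 + ((A 1 0 : ℤ) : ℝ) * hN0
  norm_num at this

end MyAux
end Part2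

namespace MyAux

lemma mobius_mul (A B : SL2Z) (x : ℝ) (hB : mobiusDefinedAt B x)
    (hA : mobiusDefinedAt A (mobius B x)) :
    mobiusDefinedAt (A * B) x ∧ mobius (A * B) x = mobius A (mobius B x) := by
  have e00 := mul_entry A B 0 0
  have e01 := mul_entry A B 0 1
  have e10 := mul_entry A B 1 0
  have e11 := mul_entry A B 1 1
  set m := mobius B x with hm
  have hB' : ((B 1 0 : ℤ) : ℝ) * x + ((B 1 1 : ℤ) : ℝ) ≠ 0 := hB
  have hA' : ((A 1 0 : ℤ) : ℝ) * m + ((A 1 1 : ℤ) : ℝ) ≠ 0 := hA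
  have hmdef : m * (((B 1 0 : ℤ) : ℝ) * x + ((B 1 1 : ℤ) : ℝ))
      = ((B 0 0 : ℤ) : ℝ) * x + ((B 0 1 : ℤ) : ℝ) := by
    rw [hm]
    exact div_mul_cancel₀ _ hB'
  have hDD : (((A * B) 1 0 : ℤ) : ℝ) * x + (((A * B) 1 1 : ℤ) : ℝ)
      = (((A 1 0 : ℤ) : ℝ) * m + ((A 1 1 : ℤ) : ℝ))
        * (((B 1 0 : ℤ) : ℝ) * x + ((B 1 1 : ℤ) : ℝ)) := by
    rw [e10, e11]
    push_cast
    linear_combination (-((A 1 0 : ℤ) : ℝ)) * hmdef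
  have hNN : (((A * B) 0 0 : ℤ) : ℝ) * x + (((A * B) 0 1 : ℤ) : ℝ)
      = (((A 0 0 : ℤ) : ℝ) * m + ((A 0 1 : ℤ) : ℝ))
        * (((B 1 0 : ℤ) : ℝ) * x + ((B 1 1 : ℤ) : ℝ)) := by
    rw [e00, e01]
    push_cast
    linear_combination (-((A 0 0 : ℤ) : ℝ)) * hmdef
  constructor
  · show (((A * B) 1 0 : ℤ) : ℝ) * x + (((A * B) 1 1 : ℤ) : ℝ) ≠ 0
    rw [hDD]
    exact mul_ne_zero hA' hB'
  · show ((((A * B) 0 0 : ℤ) : ℝ) * x + (((A * B) 0 1 : ℤ) : ℝ))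
        / ((((A * B) 1 0 : ℤ) : ℝ) * x + (((A * B) 1 1 : ℤ) : ℝ))
      = (((A 0 0 : ℤ) : ℝ) * m + ((A 0 1 : ℤ) : ℝ))
        / (((A 1 0 : ℤ) : ℝ) * m + ((A 1 1 : ℤ) : ℝ))
    rw [hNN, hDD, mul_div_mul_right _ _ hB']

lemma rigid {M : SL2Z} {u v : ℝ} (huv : u < v)
    (h : ∀ x ∈ Set.Ioo u v, mobiusDefinedAt M x ∧ mobius M x = x) :
    ∃ e : ℤ, (e = 1 ∨ e = -1) ∧ (M : Matrix (Fin 2) (Fin 2) ℤ) = e • 1 := by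
  set s := v - u with hsdef
  have hs0 : 0 < s := by rw [hsdef]; linarith
  have hpt : ∀ t : ℝ, 0 < t → t < 1 →
      (NNm M (u + t*s) = (u + t*s) * DDm M (u + t*s)) := by
    intro t ht0 ht1
    have hmem : u + t*s ∈ Set.Ioo u v := by
      constructor
      · nlinarith
      · nlinarith
    obtain ⟨hd, he⟩ := h _ hmem
    rw [definedAt_iff] at hd
    rw [mobius_eq, div_eq_iff hd] at he
    exact he
  have E1 := hpt (1/4) (by norm_num) (by norm_num)
  have E2 := hpt (1/2) (by norm_num) (by norm_num)
  have E3 := hpt (3/4) (by norm_num) (by norm_num)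
  unfold NNm DDm at E1 E2 E3
  have hm10s : ((M 1 0 : ℤ) : ℝ) * s^3 = 0 := by
    linear_combination (-8*s) * E1 + (16*s) * E2 + (-8*s) * E3
  have hm10 : ((M 1 0 : ℤ) : ℝ) = 0 := by
    rcases mul_eq_zero.mp hm10s with h' | h'
    · exact h'
    · exact absurd h' (pow_ne_zero 3 (ne_of_gt hs0))
  have hm0011' : (((M 0 0 : ℤ) : ℝ) - ((M 1 1 : ℤ) : ℝ)) * (s/4) = 0 := by
    linear_combination E2 - E1 + ((u + 1/2*s)^2 - (u + 1/4*s)^2) * hm10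
  have hm0011 : ((M 0 0 : ℤ) : ℝ) = ((M 1 1 : ℤ) : ℝ) := by
    rcases mul_eq_zero.mp hm0011' with h' | h'
    · linarith
    · exfalso
      have hq : s / 4 > 0 := by linarith
      linarith
  have hm01 : ((M 0 1 : ℤ) : ℝ) = 0 := by
    linear_combination E1 + (u + 1/4*s)^2 * hm10 - (u + 1/4*s) * hm0011
  have hz10 : (M 1 0 : ℤ) = 0 := by exact_mod_cast hm10
  have hz01 : (M 0 1 : ℤ) = 0 := by exact_mod_cast hm01
  have hz0011 : (M 0 0 : ℤ) = M 1 1 := by exact_mod_cast hm0011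
  have hdet := det2 M
  rw [hz01, hz0011] at hdet
  simp at hdet
  have hone : (M 1 1 : ℤ) = 1 ∨ (M 1 1 : ℤ) = -1 := mul_self_eq_one_iff.mp hdet
  refine ⟨M 1 1, hone, ?_⟩
  ext i j
  fin_cases i <;> fin_cases j <;>
    simp only [Matrix.smul_apply, Matrix.one_apply, smul_eq_mul] <;> norm_num
  · exact hz0011
  · exact hz01
  · exact hz10

/-- cocycle: composition of matrices fixing `p` -/
lemma fix_mul {A B : SL2Z} {p : ℝ} (hA : NNm A p = p * DDm A p) (hB : NNm B p = p * DDm B p) :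
    NNm (A * B) p = p * DDm (A * B) p ∧ DDm (A * B) p = DDm A p * DDm B p := by
  have e00 := mul_entry A B 0 0
  have e01 := mul_entry A B 0 1
  have e10 := mul_entry A B 1 0
  have e11 := mul_entry A B 1 1
  unfold NNm DDm at hA hB ⊢
  constructor
  · rw [e00, e01, e10, e11]
    push_cast
    linear_combination (((A 0 0 : ℤ) : ℝ) - p * ((A 1 0 : ℤ) : ℝ)) * hB
      + (((B 1 0 : ℤ) : ℝ) * p + ((B 1 1 : ℤ) : ℝ)) * hA
  · rw [e10, e11]
    push_cast
    linear_combination ((A 1 0 : ℤ) : ℝ) * hB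

lemma entries_of_smul_one {M : SL2Z} {e : ℤ}
    (h : (M : Matrix (Fin 2) (Fin 2) ℤ) = e • 1) :
    (M 0 0 : ℤ) = e ∧ (M 0 1 : ℤ) = 0 ∧ (M 1 0 : ℤ) = 0 ∧ (M 1 1 : ℤ) = e := by
  refine ⟨?_, ?_, ?_, ?_⟩
  · have := congrFun (congrFun h 0) 0
    simpa [Matrix.smul_apply, Matrix.one_apply] using this
  · have := congrFun (congrFun h 0) 1
    simpa [Matrix.smul_apply, Matrix.one_apply] using this
  · have := congrFun (congrFun h 1) 0
    simpa [Matrix.smul_apply, Matrix.one_apply] using this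
  · have := congrFun (congrFun h 1) 1
    simpa [Matrix.smul_apply, Matrix.one_apply] using this

lemma DDm_of_smul_one {M : SL2Z} {e : ℤ}
    (h : (M : Matrix (Fin 2) (Fin 2) ℤ) = e • 1) (p : ℝ) : DDm M p = e := by
  obtain ⟨-, -, h10, h11⟩ := entries_of_smul_one h
  unfold DDm
  rw [h10, h11]
  norm_num

lemma mobius_of_smul_one {M : SL2Z} {e : ℤ}
    (h : (M : Matrix (Fin 2) (Fin 2) ℤ) = e • 1) (he : e ≠ 0) (x : ℝ) :
    mobius M x = x := by
  obtain ⟨h00, h01, h10, h11⟩ := entries_of_smul_one h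
  rw [mobius_eq]
  unfold NNm DDm
  rw [h00, h01, h10, h11]
  have : (e : ℝ) ≠ 0 := Int.cast_ne_zero.mpr he
  field_simp
  simp only [Int.cast_zero, add_zero, mul_zero, zero_add]
  rw [mul_div_cancel_left₀ x this]

end MyAux

namespace MyAux


/-- multiplier of an SL2Z matrix fixing p/q is ±1, with integer eigen relations -/
lemma rat_eigen {A : SL2Z} {p q : ℤ} (hq : q ≠ 0) (hcop : IsCoprime p q)
    (hA : NNm A ((p : ℝ)/(q : ℝ)) = ((p : ℝ)/(q : ℝ)) * DDm A ((p : ℝ)/(q : ℝ))) :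
    ∃ m : ℤ, (m = 1 ∨ m = -1) ∧ (m * (A 0 0 + A 1 1) = 2) ∧
      A 0 0 * p + A 0 1 * q = p * m ∧ A 1 0 * p + A 1 1 * q = q * m := by
  have hqR : (q : ℝ) ≠ 0 := Int.cast_ne_zero.mpr hq
  unfold NNm DDm at hA
  have hZ : q * (A 0 0 * p + A 0 1 * q) = p * (A 1 0 * p + A 1 1 * q) := by
    have hR : (q : ℝ) * (((A 0 0 : ℤ) : ℝ) * (p:ℝ) + ((A 0 1 : ℤ) : ℝ) * (q : ℝ))
        = (p : ℝ) * (((A 1 0 : ℤ) : ℝ) * (p:ℝ) + ((A 1 1 : ℤ) : ℝ) * (q : ℝ)) := by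
      apply mul_right_cancel₀ hqR
      field_simp at hA
      linear_combination (q : ℝ) * hA
    exact_mod_cast hR
  set u := A 1 0 * p + A 1 1 * q with hu
  have hdvd : q ∣ u := by
    have h1 : q ∣ p * u := ⟨A 0 0 * p + A 0 1 * q, hZ.symm⟩
    exact (hcop.symm).dvd_of_dvd_mul_left h1
  obtain ⟨m, hm⟩ := hdvd
  have rel2 : A 1 0 * p + A 1 1 * q = q * m := by rw [← hu]; exact hm
  have rel1 : A 0 0 * p + A 0 1 * q = p * m := by
    have h2 : q * (A 0 0 * p + A 0 1 * q) = q * (p * m) := by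
      rw [hZ, hm]; ring
    exact mul_left_cancel₀ hq h2
  have hdet := det2 A
  have hunit : m * (A 0 0 + A 1 1 - m) = 1 := by
    by_cases hp : p = 0
    · subst hp
      have h01q : A 0 1 * q = 0 := by linarith [rel1]
      have h01 : A 0 1 = 0 := by
        rcases mul_eq_zero.mp h01q with h | h
        · exact h
        · exact absurd h hq
      have h11 : A 1 1 = m := by
        apply mul_left_cancel₀ hq
        linarith [rel2]
      rw [h01] at hdet
      have hd : A 0 0 * m = 1 := by rw [← h11]; linarith [hdet]
      linear_combination hd + m * h11
    · have e1 : (A 0 0 - m) * p = -(A 0 1 * q) := by linarith [rel1]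
      have e2 : (A 1 1 - m) * q = -(A 1 0 * p) := by linarith [rel2]
      have key : (A 0 0 - m) * (A 1 1 - m) * (p * q) = A 0 1 * A 1 0 * (p * q) := by
        calc (A 0 0 - m) * (A 1 1 - m) * (p * q)
            = ((A 0 0 - m) * p) * ((A 1 1 - m) * q) := by ring
          _ = (-(A 0 1 * q)) * (-(A 1 0 * p)) := by rw [e1, e2]
          _ = A 0 1 * A 1 0 * (p * q) := by ring
      have key2 : (A 0 0 - m) * (A 1 1 - m) = A 0 1 * A 1 0 :=
        mul_right_cancel₀ (mul_ne_zero hp hq) key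
      linear_combination hdet - key2
  have hm1 : m = 1 ∨ m = -1 := Int.isUnit_iff.mp (IsUnit.of_mul_eq_one _ hunit)
  have hm2 : m * m = 1 := by rcases hm1 with h | h <;> simp [h]
  have htr : m * (A 0 0 + A 1 1) = 2 := by linear_combination hunit + hm2
  exact ⟨m, hm1, htr, rel1, rel2⟩

private lemma nilrel {p q α β γ α' β' γ' : ℤ} (hq : q ≠ 0)
    (r1 : α*p + β*q = 0) (r2 : γ*p - α*q = 0)
    (r1' : α'*p + β'*q = 0) (r2' : γ'*p - α'*q = 0) :
    α*α' + β*γ' = 0 ∧ α*β' + β*(-α') = 0 ∧ γ*α' + (-α)*γ' = 0 ∧ γ*β' + (-α)*(-α') = 0 := by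
  have c1 : q * (α*α' + β*γ') = 0 := by linear_combination γ' * r1 - α * r2'
  have c2 : q * (α*β' + β*(-α')) = 0 := by linear_combination α * r1' - α' * r1
  have c3 : q * (γ*α' + (-α)*γ') = 0 := by linear_combination γ' * r2 - γ * r2'
  have c4 : q * (γ*β' + (-α)*(-α')) = 0 := by linear_combination γ * r1' - α' * r2
  exact ⟨(mul_eq_zero.mp c1).resolve_left hq, (mul_eq_zero.mp c2).resolve_left hq,
    (mul_eq_zero.mp c3).resolve_left hq, (mul_eq_zero.mp c4).resolve_left hq⟩

/-- Two SL2Z matrices both fixing the same rational point commute. -/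
lemma comm_rat {A B : SL2Z} {p q : ℤ} (hq : q ≠ 0) (hcop : IsCoprime p q)
    (hA : NNm A ((p : ℝ)/(q : ℝ)) = ((p : ℝ)/(q : ℝ)) * DDm A ((p : ℝ)/(q : ℝ)))
    (hB : NNm B ((p : ℝ)/(q : ℝ)) = ((p : ℝ)/(q : ℝ)) * DDm B ((p : ℝ)/(q : ℝ))) :
    (A : Matrix (Fin 2) (Fin 2) ℤ) * (B : Matrix (Fin 2) (Fin 2) ℤ)
      = (B : Matrix (Fin 2) (Fin 2) ℤ) * (A : Matrix (Fin 2) (Fin 2) ℤ) := by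
  obtain ⟨mA, hmA1, htrA, ra1, ra2⟩ := rat_eigen hq hcop hA
  obtain ⟨mB, hmB1, htrB, rb1, rb2⟩ := rat_eigen hq hcop hB
  have hmA2 : mA * mA = 1 := by rcases hmA1 with h | h <;> simp [h]
  have hmB2 : mB * mB = 1 := by rcases hmB1 with h | h <;> simp [h]
  have rA1 : (mA * A 0 0 - 1)*p + (mA * A 0 1)*q = 0 := by
    linear_combination mA * ra1 + p * hmA2
  have rA2 : (mA * A 1 0)*p - (mA * A 0 0 - 1)*q = 0 := by
    linear_combination mA * ra2 - q * htrA + q * hmA2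
  have rB1 : (mB * B 0 0 - 1)*p + (mB * B 0 1)*q = 0 := by
    linear_combination mB * rb1 + p * hmB2
  have rB2 : (mB * B 1 0)*p - (mB * B 0 0 - 1)*q = 0 := by
    linear_combination mB * rb2 - q * htrB + q * hmB2
  obtain ⟨sAB1, sAB2, sAB3, sAB4⟩ := nilrel hq rA1 rA2 rB1 rB2
  obtain ⟨sBA1, sBA2, sBA3, sBA4⟩ := nilrel hq rB1 rB2 rA1 rA2
  -- trace identities : mA * A 1 1 - 1 = -(mA * A 0 0 - 1)
  have htA : mA * A 1 1 - 1 = -(mA * A 0 0 - 1) := by linear_combination htrA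
  have htB : mB * B 1 1 - 1 = -(mB * B 0 0 - 1) := by linear_combination htrB
  set U : Matrix (Fin 2) (Fin 2) ℤ := mA • (A : Matrix (Fin 2) (Fin 2) ℤ) with hU
  set V : Matrix (Fin 2) (Fin 2) ℤ := mB • (B : Matrix (Fin 2) (Fin 2) ℤ) with hV
  have hXY : (U - 1) * (V - 1) = 0 := by
    rw [hU, hV]
    ext i j
    fin_cases i <;> fin_cases j <;>
      simp only [Matrix.mul_apply, Fin.sum_univ_two, Matrix.sub_apply, Matrix.smul_apply,
        Matrix.one_apply, Matrix.zero_apply, smul_eq_mul, Fin.zero_eta, Fin.mk_one,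
        if_true, one_ne_zero, if_false] <;>
      norm_num
    · linear_combination sAB1
    · linear_combination sAB2 + (mA * A 0 1) * htB
    · linear_combination sAB3 + (mB * B 1 0) * htA
    · linear_combination sAB4 + (mA * A 1 1 - 1) * htB - (mB * B 0 0 - 1) * htA
  have hYX : (V - 1) * (U - 1) = 0 := by
    rw [hU, hV]
    ext i j
    fin_cases i <;> fin_cases j <;>
      simp only [Matrix.mul_apply, Fin.sum_univ_two, Matrix.sub_apply, Matrix.smul_apply,
        Matrix.one_apply, Matrix.zero_apply, smul_eq_mul, Fin.zero_eta, Fin.mk_one,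
        if_true, one_ne_zero, if_false] <;>
      norm_num
    · linear_combination sBA1
    · linear_combination sBA2 + (mB * B 0 1) * htA
    · linear_combination sBA3 + (mA * A 1 0) * htB
    · linear_combination sBA4 + (mB * B 1 1 - 1) * htA - (mA * A 0 0 - 1) * htB
  have e1 : U * V = U + V - 1 := by
    have h : U * V - (U + V - 1) = (U - 1) * (V - 1) := by noncomm_ring
    have h0 : U * V - (U + V - 1) = 0 := by rw [h, hXY]
    exact sub_eq_zero.mp h0
  have e2 : V * U = U + V - 1 := by
    have h : V * U - (U + V - 1) = (V - 1) * (U - 1) := by noncomm_ring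
    have h0 : V * U - (U + V - 1) = 0 := by rw [h, hYX]
    exact sub_eq_zero.mp h0
  have eUV : U * V = V * U := by rw [e1, e2]
  rw [hU, hV] at eUV
  rw [smul_mul_smul_comm, smul_mul_smul_comm] at eUV
  have hswap : mB * mA = mA * mB := mul_comm _ _
  rw [hswap] at eUV
  have hcase : mA * mB = 1 ∨ mA * mB = -1 := by
    rcases hmA1 with h | h <;> rcases hmB1 with h' | h' <;> simp [h, h']
  rcases hcase with h | h
  · rw [h, one_smul, one_smul] at eUV
    exact eUV
  · rw [h, neg_smul, neg_smul, one_smul, one_smul, neg_inj] at eUV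
    exact eUV

end MyAux

namespace MyAux

lemma inv_fix {f : Equiv.Perm ℝ} {a : ℝ} (h : f a = a) : f⁻¹ a = a := by
  conv_lhs => rw [← h]
  exact f.symm_apply_apply a

/-- The commutator of two elements of G-tilde fixing a common point `a`
is the identity on a right neighbourhood of `a`. -/
lemma comm_id_near (H : Subgroup (Equiv.Perm ℝ)) (hH : ∀ h ∈ H, InGTilde h)
    {f γ : Equiv.Perm ℝ} (hfH : f ∈ H) (hγH : γ ∈ H) {a : ℝ}
    (hfa : f a = a) (hγa : γ a = a) :
    ∃ δ > 0, ∀ x ∈ Set.Ioo a (a + δ), (f⁻¹ * γ⁻¹ * f * γ) x = x := by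
  classical
  have contH : ∀ {h : Equiv.Perm ℝ}, h ∈ H → Continuous ⇑h := by
    intro h hh
    exact (StrictMono.orderIsoOfSurjective ⇑h (hH h hh).1 h.surjective).continuous
  have monoH : ∀ {h : Equiv.Perm ℝ}, h ∈ H → StrictMono ⇑h := fun hh => (hH _ hh).1
  have hfia : f⁻¹ a = a := inv_fix hfa
  have hγia : γ⁻¹ a = a := inv_fix hγa
  have hfiH : f⁻¹ ∈ H := H.inv_mem hfH
  have hγiH : γ⁻¹ ∈ H := H.inv_mem hγH
  -- germ data
  obtain ⟨ε₁, hε₁, A₁, hA₁⟩ := germ_right (hH γ hγH) a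
  obtain ⟨ε₂, hε₂, A₂, hA₂⟩ := germ_right (hH f hfH) a
  obtain ⟨ε₃, hε₃, A₃, hA₃⟩ := germ_right (hH γ⁻¹ hγiH) a
  obtain ⟨ε₄, hε₄, A₄, hA₄⟩ := germ_right (hH f⁻¹ hfiH) a
  obtain ⟨fx₁, dn₁⟩ := germ_fix (contH hγH) hε₁ hγa hA₁
  obtain ⟨fx₂, dn₂⟩ := germ_fix (contH hfH) hε₂ hfa hA₂
  obtain ⟨fx₃, dn₃⟩ := germ_fix (contH hγiH) hε₃ hγia hA₃
  obtain ⟨fx₄, dn₄⟩ := germ_fix (contH hfiH) hε₄ hfia hA₄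
  -- shrink helper
  have shrink : ∀ (u : Equiv.Perm ℝ), u ∈ H → u a = a → ∀ ε, 0 < ε →
      ∃ δ > 0, ∀ x ∈ Set.Ioo a (a + δ), u x ∈ Set.Ioo a (a + ε) := by
    intro u hu hua ε hε
    obtain ⟨δ, hδ0, hδ⟩ := Metric.continuousAt_iff.mp (contH hu).continuousAt ε hε
    refine ⟨δ, hδ0, fun x hx => ?_⟩
    have h1 : a < u x := by
      have := monoH hu hx.1
      rwa [hua] at this
    have h2 : dist x a < δ := by
      rw [Real.dist_eq, abs_lt]
      constructor <;> [linarith [hx.1]; linarith [hx.2]]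
    have h3 := hδ h2
    rw [hua, Real.dist_eq, abs_lt] at h3
    exact ⟨h1, by linarith [h3.2]⟩
  -- rigidity for the inverse pairs
  have rigid_pair : ∀ (u : Equiv.Perm ℝ) (hu : u ∈ H) (hua : u a = a)
      (Au Aiu : SL2Z) (εu εiu : ℝ), 0 < εu → 0 < εiu →
      (∀ x ∈ Set.Ioo a (a + εu), mobiusDefinedAt Au x ∧ u x = mobius Au x) →
      (∀ x ∈ Set.Ioo a (a + εiu), mobiusDefinedAt Aiu x ∧ u⁻¹ x = mobius Aiu x) →
      ∃ e : ℤ, (e = 1 ∨ e = -1) ∧ ((Aiu * Au : SL2Z) : Matrix (Fin 2) (Fin 2) ℤ) = e • 1 := by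
    intro u hu hua Au Aiu εu εiu hεu hεiu hAu hAiu
    obtain ⟨t, ht0, ht⟩ := shrink u hu hua εiu hεiu
    set δ' := min εu t with hδ'
    have hδ'0 : 0 < δ' := lt_min hεu ht0
    apply rigid (show a < a + δ' by linarith)
    intro x hx
    have hxu : x ∈ Set.Ioo a (a + εu) :=
      Set.Ioo_subset_Ioo_right (by simp [hδ']) hx
    have hxt : x ∈ Set.Ioo a (a + t) :=
      Set.Ioo_subset_Ioo_right (by simp [hδ']) hx
    obtain ⟨d1, e1⟩ := hAu x hxu
    have hux : u x ∈ Set.Ioo a (a + εiu) := ht x hxt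
    obtain ⟨d2, e2⟩ := hAiu (u x) hux
    have d2' : mobiusDefinedAt Aiu (mobius Au x) := by rw [← e1]; exact d2
    obtain ⟨dm, em⟩ := mobius_mul Aiu Au x d1 d2'
    refine ⟨dm, ?_⟩
    rw [em, ← e1, ← e2]
    exact u.symm_apply_apply x
  obtain ⟨e42, he42, hv42⟩ := rigid_pair f hfH hfa A₂ A₄ ε₂ ε₄ hε₂ hε₄ hA₂ hA₄
  obtain ⟨e31, he31, hv31⟩ := rigid_pair γ hγH hγa A₁ A₃ ε₁ ε₃ hε₁ hε₃ hA₁ hA₃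
  -- the chain: c agrees with mobius Q on a small interval
  set Q : SL2Z := A₄ * (A₃ * (A₂ * A₁)) with hQ
  obtain ⟨t₃, ht₃0, ht₃⟩ := shrink γ⁻¹ hγiH hγia ε₄ hε₄
  have hmin3 : 0 < min ε₃ t₃ := lt_min hε₃ ht₃0
  obtain ⟨t₂, ht₂0, ht₂⟩ := shrink f hfH hfa (min ε₃ t₃) hmin3
  have hmin2 : 0 < min ε₂ t₂ := lt_min hε₂ ht₂0
  obtain ⟨t₁, ht₁0, ht₁⟩ := shrink γ hγH hγa (min ε₂ t₂) hmin2
  set δ := min ε₁ t₁ with hδdef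
  have hδ0 : 0 < δ := lt_min hε₁ ht₁0
  have hchain : ∀ x ∈ Set.Ioo a (a + δ),
      mobiusDefinedAt Q x ∧ (f⁻¹ * γ⁻¹ * f * γ) x = mobius Q x := by
    intro x hx
    have hx1 : x ∈ Set.Ioo a (a + ε₁) := Set.Ioo_subset_Ioo_right (by simp [hδdef]) hx
    have hxt1 : x ∈ Set.Ioo a (a + t₁) := Set.Ioo_subset_Ioo_right (by simp [hδdef]) hx
    obtain ⟨d1, e1⟩ := hA₁ x hx1
    have hγx := ht₁ x hxt1
    have hγx2 : γ x ∈ Set.Ioo a (a + ε₂) :=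
      Set.Ioo_subset_Ioo_right (by simp) hγx
    have hγxt2 : γ x ∈ Set.Ioo a (a + t₂) :=
      Set.Ioo_subset_Ioo_right (by simp) hγx
    obtain ⟨d2, e2⟩ := hA₂ (γ x) hγx2
    have hfγx := ht₂ (γ x) hγxt2
    have hfγx3 : f (γ x) ∈ Set.Ioo a (a + ε₃) :=
      Set.Ioo_subset_Ioo_right (by simp) hfγx
    have hfγxt3 : f (γ x) ∈ Set.Ioo a (a + t₃) :=
      Set.Ioo_subset_Ioo_right (by simp) hfγx
    obtain ⟨d3, e3⟩ := hA₃ (f (γ x)) hfγx3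
    have hγfγx := ht₃ (f (γ x)) hfγxt3
    obtain ⟨d4, e4⟩ := hA₄ (γ⁻¹ (f (γ x))) hγfγx
    -- fold up
    have d2' : mobiusDefinedAt A₂ (mobius A₁ x) := by rw [← e1]; exact d2
    obtain ⟨dm21, em21⟩ := mobius_mul A₂ A₁ x d1 d2'
    have hval21 : mobius (A₂ * A₁) x = f (γ x) := by rw [em21, ← e1, ← e2]
    have d3' : mobiusDefinedAt A₃ (mobius (A₂ * A₁) x) := by rw [hval21]; exact d3
    obtain ⟨dm321, em321⟩ := mobius_mul A₃ (A₂ * A₁) x dm21 d3'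
    have hval321 : mobius (A₃ * (A₂ * A₁)) x = γ⁻¹ (f (γ x)) := by
      rw [em321, hval21, ← e3]
    have d4' : mobiusDefinedAt A₄ (mobius (A₃ * (A₂ * A₁)) x) := by rw [hval321]; exact d4
    obtain ⟨dmQ, emQ⟩ := mobius_mul A₄ (A₃ * (A₂ * A₁)) x dm321 d4'
    have hvalQ : mobius Q x = f⁻¹ (γ⁻¹ (f (γ x))) := by
      rw [hQ, emQ, hval321, ← e4]
    refine ⟨by rw [hQ]; exact dmQ, ?_⟩
    rw [hvalQ]
    simp [Equiv.Perm.mul_apply]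
  -- now show mobius Q x = x on that interval
  have hQid : ∀ x : ℝ, mobius Q x = x := by
    have hQcoe : (Q : Matrix (Fin 2) (Fin 2) ℤ)
        = (A₄ : Matrix (Fin 2) (Fin 2) ℤ) * ((A₃ : Matrix (Fin 2) (Fin 2) ℤ)
          * ((A₂ : Matrix (Fin 2) (Fin 2) ℤ) * (A₁ : Matrix (Fin 2) (Fin 2) ℤ))) := by
      rw [hQ]
      simp [Matrix.SpecialLinearGroup.coe_mul]
    by_cases hrat : ∃ r : ℚ, (r : ℝ) = a
    · -- rational fixed point: the germs commute
      obtain ⟨r, hr⟩ := hrat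
      have hq : (r.den : ℤ) ≠ 0 := by
        exact_mod_cast r.den_ne_zero
      have hcop : IsCoprime (r.num) (r.den : ℤ) := by
        rw [Int.isCoprime_iff_gcd_eq_one]
        exact r.reduced
      have hra : ((r.num : ℝ) / ((r.den : ℤ) : ℝ)) = a := by
        rw [← hr, Rat.cast_def]
        norm_num
      have fx₁' : NNm A₁ ((r.num : ℝ)/((r.den : ℤ) : ℝ))
          = ((r.num : ℝ)/((r.den : ℤ) : ℝ)) * DDm A₁ ((r.num : ℝ)/((r.den : ℤ) : ℝ)) := by
        rw [hra]; exact fx₁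
      have fx₂' : NNm A₂ ((r.num : ℝ)/((r.den : ℤ) : ℝ))
          = ((r.num : ℝ)/((r.den : ℤ) : ℝ)) * DDm A₂ ((r.num : ℝ)/((r.den : ℤ) : ℝ)) := by
        rw [hra]; exact fx₂
      have hcomm := comm_rat hq hcop fx₂' fx₁'
      have hv31' : (A₃ : Matrix (Fin 2) (Fin 2) ℤ) * (A₁ : Matrix (Fin 2) (Fin 2) ℤ) = e31 • 1 := by
        rw [← Matrix.SpecialLinearGroup.coe_mul]; exact hv31
      have hv42' : (A₄ : Matrix (Fin 2) (Fin 2) ℤ) * (A₂ : Matrix (Fin 2) (Fin 2) ℤ) = e42 • 1 := by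
        rw [← Matrix.SpecialLinearGroup.coe_mul]; exact hv42
      have hQval : (Q : Matrix (Fin 2) (Fin 2) ℤ) = (e31 * e42) • 1 := by
        rw [hQcoe, hcomm, ← Matrix.mul_assoc, ← Matrix.mul_assoc]
        calc (A₄ : Matrix (Fin 2) (Fin 2) ℤ) * ↑A₃ * ↑A₁ * ↑A₂
            = (A₄ : Matrix (Fin 2) (Fin 2) ℤ) * (↑A₃ * ↑A₁) * ↑A₂ := by
              rw [Matrix.mul_assoc (A₄ : Matrix (Fin 2) (Fin 2) ℤ)]
          _ = (A₄ : Matrix (Fin 2) (Fin 2) ℤ) * (e31 • 1) * ↑A₂ := by rw [hv31']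
          _ = (e31 * e42) • 1 := by
              rw [mul_smul_comm, mul_one, smul_mul_assoc, hv42', smul_smul]
      have hne : e31 * e42 ≠ 0 := by
        rcases he31 with h | h <;> rcases he42 with h' | h' <;> simp [h, h']
      exact mobius_of_smul_one hQval hne
    · -- irrational fixed point
      obtain ⟨fm21, dd21⟩ := fix_mul fx₂ fx₁
      obtain ⟨fm321, dd321⟩ := fix_mul fx₃ fm21
      obtain ⟨fmQ, ddQ⟩ := fix_mul fx₄ fm321
      have d42 := (fix_mul fx₄ fx₂).2
      have d31 := (fix_mul fx₃ fx₁).2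
      have dd42 : DDm (A₄ * A₂) a = (e42 : ℝ) := by
        rw [DDm_of_smul_one hv42 a]
      have dd31 : DDm (A₃ * A₁) a = (e31 : ℝ) := by
        rw [DDm_of_smul_one hv31 a]
      set eZ : ℤ := e42 * e31 with heZdef
      have heZ : eZ = 1 ∨ eZ = -1 := by
        rcases he42 with h | h <;> rcases he31 with h' | h' <;> simp [heZdef, h, h']
      have heZ0 : (eZ : ℝ) ≠ 0 := by
        rcases heZ with h | h <;> rw [h] <;> norm_num
      have hDQ : DDm Q a = (eZ : ℝ) := by
        rw [hQ, ddQ, dd321, dd21]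
        have : DDm A₄ a * (DDm A₃ a * (DDm A₂ a * DDm A₁ a))
            = (DDm A₄ a * DDm A₂ a) * (DDm A₃ a * DDm A₁ a) := by ring
        rw [this, ← d42, ← d31, dd42, dd31, heZdef]
        push_cast
        ring
      have hfixQ : NNm Q a = a * DDm Q a := by rw [hQ]; exact fmQ
      -- entries of Q
      have h10 : (Q 1 0 : ℤ) = 0 := by
        by_contra h10
        apply hrat
        have h10R : ((Q 1 0 : ℤ) : ℝ) ≠ 0 := Int.cast_ne_zero.mpr h10
        refine ⟨((eZ - Q 1 1 : ℤ) : ℚ) / ((Q 1 0 : ℤ) : ℚ), ?_⟩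
        unfold DDm at hDQ
        push_cast
        rw [div_eq_iff (by exact_mod_cast h10R)]
        push_cast
        linarith [hDQ]
      have h11 : (Q 1 1 : ℤ) = eZ := by
        unfold DDm at hDQ
        rw [h10] at hDQ
        push_cast at hDQ
        have hR : ((Q 1 1 : ℤ) : ℝ) = (eZ : ℝ) := by linarith [hDQ]
        exact_mod_cast hR
      have h00 : (Q 0 0 : ℤ) = eZ := by
        by_contra h00
        apply hrat
        have hne : ((Q 0 0 : ℤ) : ℝ) - (eZ : ℝ) ≠ 0 := by
          intro hc
          apply h00
          have : ((Q 0 0 : ℤ) : ℝ) = (eZ : ℝ) := by linarith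
          exact_mod_cast this
        refine ⟨((- Q 0 1 : ℤ) : ℚ) / ((Q 0 0 - eZ : ℤ) : ℚ), ?_⟩
        unfold NNm at hfixQ
        rw [hDQ] at hfixQ
        push_cast
        rw [div_eq_iff (by push_cast at hne ⊢; intro hc; apply hne; linarith)]
        push_cast
        linarith [hfixQ]
      have h01 : (Q 0 1 : ℤ) = 0 := by
        unfold NNm at hfixQ
        rw [hDQ, h00] at hfixQ
        push_cast at hfixQ
        have hR : ((Q 0 1 : ℤ) : ℝ) = 0 := by linarith [hfixQ]
        exact_mod_cast hR
      -- conclude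
      have hQval : (Q : Matrix (Fin 2) (Fin 2) ℤ) = eZ • 1 := by
        ext i j
        fin_cases i <;> fin_cases j <;>
          simp only [Matrix.smul_apply, Matrix.one_apply, smul_eq_mul] <;> norm_num
        · exact h00
        · exact h01
        · exact h10
        · exact h11
      exact mobius_of_smul_one hQval (by exact_mod_cast heZ0)
  refine ⟨δ, hδ0, fun x hx => ?_⟩
  rw [(hchain x hx).2, hQid x]

end MyAux

/-- If a subgroup `H` of `G̃` contains `f`, `g` and reals `a < b < b'` with
`f(a) = g(a) = a`, `f(b) = b`, `g(b') = b'`, `(a, b) ⊆ supp f`, `(a, b') ⊆ supp g`,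
then `H` contains elements `f₁, g₁` and reals `b₁ < c₁` with `g₁(b₁) = b₁`,
`f₁(c₁) = c₁`, `(b₁, c₁] ⊆ supp g₁` and `[b₁, c₁) ⊆ supp f₁`. -/
theorem nested_supports_yield_crossed_supports
    (H : Subgroup (Equiv.Perm ℝ)) (hH : ∀ h ∈ H, InGTilde h)
    (f g : Equiv.Perm ℝ) (hfH : f ∈ H) (hgH : g ∈ H)
    (a b b' : ℝ) (hab : a < b) (hbb' : b < b')
    (hfa : f a = a) (hga : g a = a) (hfb : f b = b) (hgb' : g b' = b')
    (hsf : Set.Ioo a b ⊆ {x : ℝ | f x ≠ x})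
    (hsg : Set.Ioo a b' ⊆ {x : ℝ | g x ≠ x}) :
    ∃ f₁ ∈ H, ∃ g₁ ∈ H, ∃ b₁ c₁ : ℝ, b₁ < c₁ ∧
      g₁ b₁ = b₁ ∧ f₁ c₁ = c₁ ∧
      Set.Ioc b₁ c₁ ⊆ {x : ℝ | g₁ x ≠ x} ∧
      Set.Ico b₁ c₁ ⊆ {x : ℝ | f₁ x ≠ x} := by
  classical
  have monoH : ∀ {h : Equiv.Perm ℝ}, h ∈ H → StrictMono ⇑h := fun hh => (hH _ hh).1
  have contH : ∀ {h : Equiv.Perm ℝ}, h ∈ H → Continuous ⇑h := by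
    intro h hh
    exact (StrictMono.orderIsoOfSurjective ⇑h (hH h hh).1 h.surjective).continuous
  -- choose γ with γ b > b
  have hgb : g b ≠ b := hsg ⟨hab, hbb'⟩
  obtain ⟨γ, hγH, hγa, hγb⟩ : ∃ γ ∈ H, γ a = a ∧ b < γ b := by
    rcases hgb.lt_or_gt with hlt | hgt
    · refine ⟨g⁻¹, H.inv_mem hgH, MyAux.inv_fix hga, ?_⟩
      have := monoH (H.inv_mem hgH) hlt
      rwa [show ∀ y, g⁻¹ (g y) = y from g.symm_apply_apply] at this
    · exact ⟨g, hgH, hga, hgt⟩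
  have hγiH : γ⁻¹ ∈ H := H.inv_mem hγH
  have hγia : γ⁻¹ a = a := MyAux.inv_fix hγa
  set x₀ : ℝ := γ⁻¹ b with hx₀def
  have hγx₀ : γ x₀ = b := γ.apply_symm_apply b
  have hax₀ : a < x₀ := by
    have := monoH hγiH hab
    rwa [hγia] at this
  have hx₀b : x₀ < b := by
    have h := monoH hγH
    have : γ x₀ < γ b := by rw [hγx₀]; exact hγb
    exact h.lt_iff_lt.mp this
  -- the commutator
  set c : Equiv.Perm ℝ := f⁻¹ * γ⁻¹ * f * γ with hcdef
  have hcH : c ∈ H := by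
    rw [hcdef]
    exact H.mul_mem (H.mul_mem (H.mul_mem (H.inv_mem hfH) hγiH) hfH) hγH
  have hcx₀ : c x₀ = f⁻¹ x₀ := by
    rw [hcdef]
    simp only [Equiv.Perm.mul_apply]
    rw [hγx₀, hfb]
  have hfx₀ : f x₀ ≠ x₀ := hsf ⟨hax₀, hx₀b⟩
  have hcne : c x₀ ≠ x₀ := by
    rw [hcx₀]
    intro h
    have h2 := congrArg f h
    rw [show ∀ y, f (f⁻¹ y) = y from f.apply_symm_apply] at h2
    exact hfx₀ h2.symm
  -- c is the identity near a⁺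
  obtain ⟨δ, hδ0, hcid⟩ := MyAux.comm_id_near H hH hfH hγH hfa hγa
  set q : ℝ := a + min δ (x₀ - a) / 2 with hqdef
  have hmin0 : 0 < min δ (x₀ - a) := lt_min hδ0 (by linarith)
  have haq : a < q := by rw [hqdef]; linarith
  have hqδ : q < a + δ := by
    rw [hqdef]
    have : min δ (x₀ - a) ≤ δ := min_le_left _ _
    linarith
  have hqx₀ : q < x₀ := by
    rw [hqdef]
    have : min δ (x₀ - a) ≤ x₀ - a := min_le_right _ _
    linarith
  have hcq : c q = q := by
    have := hcid q ⟨haq, hqδ⟩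
    rw [hcdef]
    exact this
  -- the sup of fixed points of c in [q, x₀]
  set S : Set ℝ := Set.Icc q x₀ ∩ {y | c y = y} with hSdef
  have hSq : q ∈ S := ⟨⟨le_refl q, le_of_lt hqx₀⟩, hcq⟩
  have hSbdd : BddAbove S := ⟨x₀, fun y hy => hy.1.2⟩
  have hScl : IsClosed S :=
    IsClosed.inter isClosed_Icc (isClosed_eq (contH hcH) continuous_id)
  set b₁ : ℝ := sSup S with hb₁def
  have hb₁S : b₁ ∈ S := hScl.csSup_mem ⟨q, hSq⟩ hSbdd
  have hb₁fix : c b₁ = b₁ := hb₁S.2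
  have hb₁q : q ≤ b₁ := le_csSup hSbdd hSq
  have hb₁lt : b₁ < x₀ := by
    rcases lt_or_eq_of_le hb₁S.1.2 with h | h
    · exact h
    · exact absurd (h ▸ hb₁fix) hcne
  -- f₁ : conjugate of f
  set f₁ : Equiv.Perm ℝ := γ⁻¹ * f * γ with hf₁def
  have hf₁H : f₁ ∈ H := by
    rw [hf₁def]
    exact H.mul_mem (H.mul_mem hγiH hfH) hγH
  have hf₁x₀ : f₁ x₀ = x₀ := by
    rw [hf₁def]
    simp only [Equiv.Perm.mul_apply]
    rw [hγx₀, hfb]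
  refine ⟨f₁, hf₁H, c, hcH, b₁, x₀, hb₁lt, hb₁fix, hf₁x₀, ?_, ?_⟩
  · -- (b₁, x₀] ⊆ supp c
    intro y hy
    simp only [Set.mem_setOf_eq]
    intro hcy
    have hyS : y ∈ S := ⟨⟨le_trans hb₁q (le_of_lt hy.1), hy.2⟩, hcy⟩
    have : y ≤ b₁ := le_csSup hSbdd hyS
    exact absurd hy.1 (not_lt.mpr this)
  · -- [b₁, x₀) ⊆ supp f₁
    intro y hy
    simp only [Set.mem_setOf_eq]
    intro heq
    rw [hf₁def] at heq
    simp only [Equiv.Perm.mul_apply] at heq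
    have hfγy : f (γ y) = γ y := by
      have h2 := congrArg γ heq
      rwa [show ∀ y, γ (γ⁻¹ y) = y from γ.apply_symm_apply] at h2
    have hmem : γ y ∈ Set.Ioo a b := by
      constructor
      · have hay : a < y := lt_of_lt_of_le haq (le_trans hb₁q hy.1)
        have := monoH hγH hay
        rwa [hγa] at this
      · have := monoH hγH hy.2
        rwa [hγx₀] at this
    exact (hsf hmem) hfγy

end
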